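/- Every non-constant polynomial P(x,y) in C[x,y] can be written as P(x,y) = G1(x)·H1(x,y) + G2(y)·H2(x,y) where G1(x) and G2(y) are non-constant polynomials in one variable and H1, H2 are polynomials in C[x,y]. -/

import Mathlib

open MvPolynomial

/-- Taylor-type representation: any `P` can be written as
`(x-a)H1 + (y-b)H2 + P(a,b)`. -/
lemma rep_aux (a b : ℂ) (P : MvPolynomial (Fin 2) ℂ) :
    ∃ H1 H2 : MvPolynomial (Fin 2) ℂ,
      P = (X 0 - C a) * H1 + (X 1 - C b) * H2 + C (eval ![a, b] P) := by
  induction P using MvPolynomial.induction_on with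
  | C c => exact ⟨0, 0, by simp⟩
  | add p q hp hq =>
      obtain ⟨H1, H2, h⟩ := hp
      obtain ⟨K1, K2, k⟩ := hq
      refine ⟨H1 + K1, H2 + K2, ?_⟩
      rw [map_add, C_add]
      nth_rewrite 1 [h, k]
      ring
  | mul_X p i hp =>
      obtain ⟨H1, H2, h⟩ := hp
      fin_cases i <;> simp only [Fin.zero_eta, Fin.mk_one, Fin.isValue]
      · refine ⟨H1 * X 0 + C (eval ![a, b] p), H2 * X 0, ?_⟩
        rw [map_mul, eval_X, Matrix.cons_val_zero, C_mul]
        nth_rewrite 1 [h]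
        ring
      · refine ⟨H1 * X 1, H2 * X 1 + C (eval ![a, b] p), ?_⟩
        rw [map_mul, eval_X, Matrix.cons_val_one, Matrix.cons_val_zero, C_mul]
        nth_rewrite 1 [h]
        ring

/-- Any nonconstant polynomial in two variables over `ℂ` has a zero. -/
lemma exists_zero (P : MvPolynomial (Fin 2) ℂ) (hP : ∀ c : ℂ, P ≠ MvPolynomial.C c) :
    ∃ a b : ℂ, eval ![a, b] P = 0 := by
  set F := finSuccEquiv ℂ 1 P with hF
  have key : ∀ (a : ℂ) (s : Fin 1 → ℂ),
      eval ![a, s 0] P = Polynomial.eval a (Polynomial.map (eval s) F) := by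
    intro a s
    have h := eval_eq_eval_mv_eval' s a P
    have : (Fin.cons a s : Fin 2 → ℂ) = ![a, s 0] := by
      funext i; fin_cases i <;> rfl
    rw [this] at h
    exact h
  by_cases hn : 0 < F.natDegree
  · have hP0 : P ≠ 0 := by simpa using hP 0
    have hF0 : F ≠ 0 := by
      intro h
      apply hP0
      have h2 := congrArg (finSuccEquiv ℂ 1).symm h
      simpa [hF] using h2
    have hg : F.coeff F.natDegree ≠ 0 := by
      rw [← Polynomial.leadingCoeff]
      exact Polynomial.leadingCoeff_ne_zero.mpr hF0
    obtain ⟨s, hs⟩ : ∃ s : Fin 1 → ℂ, eval s (F.coeff F.natDegree) ≠ 0 := by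
      by_contra hcon
      push_neg at hcon
      exact hg (MvPolynomial.funext fun x => by rw [hcon x, map_zero])
    have hdeg : 0 < (Polynomial.map (eval s) F).degree := by
      have h1 : F.natDegree ≤ (Polynomial.map (eval s) F).natDegree :=
        Polynomial.le_natDegree_of_ne_zero (by rwa [Polynomial.coeff_map])
      exact Polynomial.natDegree_pos_iff_degree_pos.mp (lt_of_lt_of_le hn h1)
    obtain ⟨a, ha⟩ := Complex.exists_root hdeg
    exact ⟨a, s 0, by rw [key a s]; exact ha⟩
  · push_neg at hn
    obtain ⟨g, hgF⟩ := Polynomial.natDegree_eq_zero.mp (Nat.le_zero.mp hn)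
    set h0 : Polynomial ℂ :=
      Polynomial.map (eval (default : Fin 0 → ℂ)) (finSuccEquiv ℂ 0 g) with hh0
    have key2 : ∀ b : ℂ, eval (fun _ => b : Fin 1 → ℂ) g = Polynomial.eval b h0 := by
      intro b
      have h := eval_eq_eval_mv_eval' (default : Fin 0 → ℂ) b g
      have he : (Fin.cons b (default : Fin 0 → ℂ) : Fin 1 → ℂ) = fun _ => b := by
        funext i; fin_cases i; rfl
      rw [he] at h
      exact h
    by_cases hd : 0 < h0.degree
    · obtain ⟨b, hb⟩ := Complex.exists_root hd
      refine ⟨0, b, ?_⟩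
      have : ((fun _ => b : Fin 1 → ℂ) 0) = b := rfl
      rw [← this, key 0 (fun _ => b), ← hgF]
      rw [Polynomial.map_C, Polynomial.eval_C, key2 b]
      exact hb
    · exfalso
      have hd0 : h0.natDegree = 0 :=
        Polynomial.natDegree_eq_zero_iff_degree_le_zero.mpr (not_lt.mp hd)
      obtain ⟨c, hc⟩ := Polynomial.natDegree_eq_zero.mp hd0
      have hgc : g = MvPolynomial.C c := by
        apply MvPolynomial.funext
        intro t
        have ht : t = (fun _ => t 0) := by funext i; fin_cases i; rfl
        rw [ht, key2 (t 0), ← hc, Polynomial.eval_C, eval_C]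
      apply hP c
      have hFc : F = Polynomial.C (MvPolynomial.C c) := by rw [← hgF, hgc]
      have h1 := congrArg (finSuccEquiv ℂ 1).symm hFc
      rw [hF, AlgEquiv.symm_apply_apply] at h1
      rw [h1]
      exact RingHom.congr_fun (finSuccEquiv_comp_C_eq_C 1) c

/-- Every non-constant polynomial `P(x,y) ∈ ℂ[x,y]` is Cartesian:
`P = G1(x)·H1(x,y) + G2(y)·H2(x,y)` with `G1`, `G2` non-constant one-variable polynomials. -/
theorem nonconstant_two_var_is_cartesian
    (P : MvPolynomial (Fin 2) ℂ) (hP : ∀ c : ℂ, P ≠ MvPolynomial.C c) :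
    ∃ (G1 G2 : Polynomial ℂ) (H1 H2 : MvPolynomial (Fin 2) ℂ),
      0 < G1.natDegree ∧ 0 < G2.natDegree ∧
      P = Polynomial.aeval (MvPolynomial.X 0 : MvPolynomial (Fin 2) ℂ) G1 * H1
          + Polynomial.aeval (MvPolynomial.X 1 : MvPolynomial (Fin 2) ℂ) G2 * H2 := by
  obtain ⟨a, b, hab⟩ := exists_zero P hP
  obtain ⟨H1, H2, h⟩ := rep_aux a b P
  refine ⟨Polynomial.X - Polynomial.C a, Polynomial.X - Polynomial.C b, H1, H2, ?_, ?_, ?_⟩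
  · simp [Polynomial.natDegree_X_sub_C]
  · simp [Polynomial.natDegree_X_sub_C]
  · rw [h, hab, map_zero, add_zero]
    simp [map_sub, Polynomial.aeval_X, Polynomial.aeval_C, algebraMap_eq]
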